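/- There exists a constant c > 0 such that for every real κ ≥ 2, every real polynomial p satisfying p(0) = 1 and |p(x)| ≤ 1/3 for all x ∈ [1/κ, 1] has degree at least c·√κ/ln κ. -/

import Mathlib

open Matrix Polynomial Set

/-- Euclidean norm of a vector in `ℝⁿ`. -/
noncomputable def vecNorm {n : ℕ} (v : Fin n → ℝ) : ℝ :=
  Real.sqrt (∑ i, v i ^ 2)

/-- Spectral (operator) norm of a real matrix. -/
noncomputable def matNorm {m n : ℕ} (A : Matrix (Fin m) (Fin n) ℝ) : ℝ :=
  sSup {c : ℝ | ∃ v : Fin n → ℝ, vecNorm v ≤ 1 ∧ c = vecNorm (A.mulVec v)}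

/-- Largest eigenvalue of a square real matrix. -/
noncomputable def lmax {n : ℕ} (A : Matrix (Fin n) (Fin n) ℝ) : ℝ :=
  sSup {μ : ℝ | ∃ v : Fin n → ℝ, v ≠ 0 ∧ A.mulVec v = μ • v}

/-- Smallest eigenvalue of a square real matrix. -/
noncomputable def lmin {n : ℕ} (A : Matrix (Fin n) (Fin n) ℝ) : ℝ :=
  sInf {μ : ℝ | ∃ v : Fin n → ℝ, v ≠ 0 ∧ A.mulVec v = μ • v}

/-- A matrix is tridiagonal if `T i j = 0` whenever `|i - j| > 1`. -/
def IsTridiagonal {k : ℕ} (T : Matrix (Fin k) (Fin k) ℝ) : Prop :=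
  ∀ i j : Fin k, 1 < |(i : ℤ) - (j : ℤ)| → T i j = 0

/-- The matrix function `f(A)` of a real symmetric matrix, defined through the
eigendecomposition `A = V Λ Vᵀ` as `V f(Λ) Vᵀ`. -/
noncomputable def matFun {n : ℕ} {A : Matrix (Fin n) (Fin n) ℝ} (hA : A.IsHermitian)
    (f : ℝ → ℝ) : Matrix (Fin n) (Fin n) ℝ :=
  (hA.eigenvectorUnitary : Matrix (Fin n) (Fin n) ℝ) * Matrix.diagonal (f ∘ hA.eigenvalues) *
    star (hA.eigenvectorUnitary : Matrix (Fin n) (Fin n) ℝ)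

/-- The `i`-th Chebyshev polynomial of the first kind, shifted and stretched to the range
`[lmin A - η, lmax A + η]`: with `r_max = lmax A + η`, `r_min = lmin A - η` and
`δ = 2 / (r_max - r_min)`, this is `y ↦ T_i (δ (y - r_min) - 1)`. -/
noncomputable def shiftedCheb {n : ℕ} (A : Matrix (Fin n) (Fin n) ℝ) (η : ℝ) (i : ℕ) :
    Polynomial ℝ :=
  (Polynomial.Chebyshev.T ℝ i).comp
    (Polynomial.C (2 / ((lmax A + η) - (lmin A - η))) *
      (Polynomial.X - Polynomial.C (lmin A - η)) - 1)

private lemma aux_natDegree_T_le (N : ℕ) : (Polynomial.Chebyshev.T ℝ (N : ℤ)).natDegree ≤ N := by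
  induction N using Nat.strong_induction_on with
  | _ N ih =>
    match N with
    | 0 => simp [Polynomial.Chebyshev.T_zero]
    | 1 => simp [Polynomial.Chebyshev.T_one]
    | (n+2) =>
      have h : Polynomial.Chebyshev.T ℝ ((n:ℤ)+2)
          = 2 * X * Polynomial.Chebyshev.T ℝ ((n:ℤ)+1) - Polynomial.Chebyshev.T ℝ (n:ℤ) :=
        Polynomial.Chebyshev.T_add_two ℝ n
      have h2 : ((n+2 : ℕ) : ℤ) = (n:ℤ)+2 := by push_cast; ring
      rw [h2, h]
      refine le_trans (natDegree_sub_le _ _) ?_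
      have b1 : (2 * X * Polynomial.Chebyshev.T ℝ ((n:ℤ)+1)).natDegree ≤ n+2 := by
        refine le_trans (natDegree_mul_le) ?_
        have hc : ((n+1 : ℕ) : ℤ) = (n:ℤ)+1 := by push_cast; ring
        have hT := ih (n+1) (by omega)
        rw [hc] at hT
        have hX : (2 * X : ℝ[X]).natDegree ≤ 1 := by
          refine le_trans natDegree_mul_le ?_; simp
        omega
      have b2 := ih n (by omega)
      simp only [max_le_iff]
      exact ⟨b1, by omega⟩

private lemma aux_T_cosh (n : ℤ) (t : ℝ) :
    (Polynomial.Chebyshev.T ℝ n).eval (Real.cosh t) = Real.cosh (n * t) := by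
  have h := Polynomial.Chebyshev.T_complex_cos (↑t * Complex.I) n
  rw [Complex.cos_mul_I] at h
  have h2 : (n : ℂ) * (↑t * Complex.I) = ↑((n:ℝ) * t) * Complex.I := by push_cast; ring
  rw [h2, Complex.cos_mul_I] at h
  have h3 : ((((Polynomial.Chebyshev.T ℝ n).eval (Real.cosh t) : ℝ)) : ℂ)
      = (Polynomial.Chebyshev.T ℂ n).eval ((Real.cosh t : ℝ) : ℂ) :=
    Polynomial.Chebyshev.complex_ofReal_eval_T _ n
  rw [Complex.ofReal_cosh, h, ← Complex.ofReal_cosh] at h3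
  exact_mod_cast h3

private lemma aux_sign {n : ℕ} (v : Fin (n+1) → ℝ) (hmono : StrictMono v)
    (hpos : ∀ k, 0 < v k) (j : Fin (n+1)) :
    (-1)^(j:ℕ) * ∏ k ∈ Finset.univ.erase j, ((v j - v k)⁻¹ * (0 - v k))
      = ∏ k ∈ Finset.univ.erase j, |(v j - v k)⁻¹ * (0 - v k)| := by
  set f : Fin (n+1) → ℝ := fun k => (v j - v k)⁻¹ * (0 - v k) with hf
  have e1 : (Finset.univ.erase j).filter (fun k => k < j) = Finset.Iio j := by
    ext k
    simp only [Finset.mem_filter, Finset.mem_erase, Finset.mem_univ, Finset.mem_Iio, true_and,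
      and_true, Fin.lt_def, Fin.ext_iff, ne_eq]
    omega
  have e2 : (Finset.univ.erase j).filter (fun k => ¬ k < j) = Finset.Ioi j := by
    ext k
    simp only [Finset.mem_filter, Finset.mem_erase, Finset.mem_univ, Finset.mem_Ioi, true_and,
      and_true, not_lt, Fin.lt_def, Fin.le_def, Fin.ext_iff, ne_eq]
    omega
  have hneg : ∀ k ∈ Finset.Iio j, f k = -|f k| := by
    intro k hk
    rw [Finset.mem_Iio] at hk
    have h1 : 0 < v j - v k := sub_pos.mpr (hmono hk)
    have h2 : 0 - v k < 0 := by have := hpos k; linarith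
    have : f k < 0 := mul_neg_of_pos_of_neg (inv_pos.mpr h1) h2
    rw [abs_of_neg this]; ring
  have hposf : ∀ k ∈ Finset.Ioi j, f k = |f k| := by
    intro k hk
    rw [Finset.mem_Ioi] at hk
    have h1 : v j - v k < 0 := sub_neg.mpr (hmono hk)
    have h2 : 0 - v k < 0 := by have := hpos k; linarith
    have : 0 < f k := mul_pos_of_neg_of_neg (inv_neg''.mpr h1) h2
    rw [abs_of_pos this]
  have hsplit := Finset.prod_filter_mul_prod_filter_not (Finset.univ.erase j)
    (fun k => k < j) f
  have hsplit2 := Finset.prod_filter_mul_prod_filter_not (Finset.univ.erase j)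
    (fun k => k < j) (fun k => |f k|)
  rw [e1, e2] at hsplit hsplit2
  have hIio : ∏ k ∈ Finset.Iio j, f k = (-1)^(j:ℕ) * ∏ k ∈ Finset.Iio j, |f k| := by
    rw [Finset.prod_congr rfl hneg]
    rw [show (fun k => -|f k|) = fun k => (-1) * |f k| by funext k; ring]
    rw [Finset.prod_mul_distrib, Finset.prod_const, Fin.card_Iio]
  have hIoi : ∏ k ∈ Finset.Ioi j, f k = ∏ k ∈ Finset.Ioi j, |f k| :=
    Finset.prod_congr rfl hposf
  rw [← hsplit, ← hsplit2, hIio, hIoi]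
  set A := ∏ k ∈ Finset.Iio j, |f k|
  set B := ∏ k ∈ Finset.Ioi j, |f k|
  have h9 : ((-1:ℝ))^(j:ℕ) * ((-1)^(j:ℕ) * A * B) = ((-1)^((j:ℕ)+(j:ℕ))) * (A*B) := by
    rw [pow_add]; ring
  rw [h9, show (j:ℕ)+(j:ℕ) = 2*(j:ℕ) by ring, pow_mul]
  norm_num


set_option maxHeartbeats 2000000 in
theorem chebyshev_degree_lower_bound :
    ∃ c : ℝ, 0 < c ∧
      ∀ κ : ℝ, 2 ≤ κ → ∀ p : Polynomial ℝ, p.eval 0 = 1 →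
        (∀ x ∈ Set.Icc (1 / κ) 1, |p.eval x| ≤ 1 / 3) →
        c * Real.sqrt κ / Real.log κ ≤ (p.natDegree : ℝ) := by
  refine ⟨1/20, by norm_num, ?_⟩
  intro κ hκ p hp0 hpb
  have hκ0 : (0:ℝ) < κ := by linarith
  have hκ1 : (1:ℝ) < κ := by linarith
  have hlogκ : 0 < Real.log κ := Real.log_pos hκ1
  have hlog04 : (0.4:ℝ) < Real.log κ := by
    have h2 := Real.log_two_gt_d9
    have := Real.log_le_log (by norm_num : (0:ℝ) < 2) hκ
    linarith
  have hlog3 : (1:ℝ) ≤ Real.log 3 := by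
    rw [Real.le_log_iff_exp_le (by norm_num)]
    have := Real.exp_one_lt_d9
    linarith
  have hsqnn : 0 ≤ Real.sqrt κ := Real.sqrt_nonneg κ
  have hsqpos : 0 < Real.sqrt κ := Real.sqrt_pos.mpr hκ0
  -- reduce to the key bound
  suffices h : Real.log 3 * Real.sqrt κ / 8 ≤ (p.natDegree : ℝ) by
    refine le_trans ?_ h
    rw [div_le_div_iff₀ hlogκ (by norm_num)]
    nlinarith [mul_le_mul_of_nonneg_left hlog04.le hsqnn,
      mul_le_mul_of_nonneg_right hlog3 hsqnn]
  set a : ℝ := 1/κ with ha_def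
  have ha0 : 0 < a := by positivity
  have ha2 : a ≤ 1/2 := by
    rw [ha_def, div_le_div_iff₀ hκ0 (by norm_num)]; linarith
  have ha1 : a < 1 := by linarith
  have h1a : (0:ℝ) < 1 - a := by linarith
  rcases Nat.eq_zero_or_pos p.natDegree with h0 | hN
  · exfalso
    obtain ⟨c, rfl⟩ := Polynomial.natDegree_eq_zero.mp h0
    have h1 : c = 1 := by simpa using hp0
    have h2 := hpb 1 ⟨by rw [div_le_one hκ0]; linarith, le_refl 1⟩
    rw [h1] at h2
    norm_num at h2
  set N := p.natDegree with hN_def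
  have hN0 : (0:ℝ) < N := by exact_mod_cast hN
  have hπ : (0:ℝ) < Real.pi := Real.pi_pos
  -- nodes
  set v : Fin (N+1) → ℝ :=
    fun j => ((1+a) - (1-a) * Real.cos ((j:ℝ) * Real.pi / N)) / 2 with hv_def
  have hθmem : ∀ j : Fin (N+1), (j:ℝ) * Real.pi / N ∈ Set.Icc 0 Real.pi := by
    intro j
    constructor
    · positivity
    · rw [div_le_iff₀ hN0]
      have : (j:ℝ) ≤ N := by
        have := j.isLt
        exact_mod_cast Nat.lt_succ_iff.mp this
      nlinarith
  have hmono : StrictMono v := by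
    intro j k hjk
    have hjk' : (j:ℝ) < (k:ℝ) := by exact_mod_cast hjk
    have hlt : (j:ℝ) * Real.pi / N < (k:ℝ) * Real.pi / N := by
      apply div_lt_div_of_pos_right _ hN0
      nlinarith
    have hcos := Real.strictAntiOn_cos (hθmem j) (hθmem k) hlt
    rw [hv_def]
    simp only
    nlinarith
  have hv_mem : ∀ j, v j ∈ Set.Icc a 1 := by
    intro j
    have hc1 : Real.cos ((j:ℝ) * Real.pi / N) ≤ 1 := Real.cos_le_one _
    have hc2 : -1 ≤ Real.cos ((j:ℝ) * Real.pi / N) := Real.neg_one_le_cos _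
    constructor
    · rw [hv_def]; simp only; nlinarith
    · rw [hv_def]; simp only; nlinarith
  have hv_pos : ∀ j, 0 < v j := fun j => lt_of_lt_of_le ha0 (hv_mem j).1
  have hv_inj : Set.InjOn v (Finset.univ : Finset (Fin (N+1))) := hmono.injective.injOn
  have hcard : (Finset.univ : Finset (Fin (N+1))).card = N+1 := Finset.card_fin _
  -- shifted Chebyshev polynomial
  set Tq : ℝ[X] := (Polynomial.Chebyshev.T ℝ (N:ℤ)).comp
    (Polynomial.C ((1+a)/(1-a)) - Polynomial.C (2/(1-a)) * Polynomial.X) with hTq_def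
  have hTeval : ∀ x : ℝ, Tq.eval x
      = (Polynomial.Chebyshev.T ℝ (N:ℤ)).eval (((1+a) - 2*x)/(1-a)) := by
    intro x
    rw [hTq_def, Polynomial.eval_comp]
    congr 1
    simp only [Polynomial.eval_sub, Polynomial.eval_mul, Polynomial.eval_C, Polynomial.eval_X]
    field_simp
  have hTnode : ∀ j : Fin (N+1), Tq.eval (v j) = (-1)^(j:ℕ) := by
    intro j
    rw [hTeval]
    have harg : ((1+a) - 2 * v j)/(1-a) = Real.cos ((j:ℝ) * Real.pi / N) := by
      rw [hv_def]
      simp only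
      field_simp
      ring
    rw [harg, Polynomial.Chebyshev.T_real_cos]
    have hNa : ((N:ℤ):ℝ) * ((j:ℝ) * Real.pi / N) = (j:ℕ) * Real.pi := by
      push_cast
      field_simp
    rw [hNa]
    simpa using Real.cos_add_nat_mul_pi 0 (j:ℕ)
  -- degree bounds
  have hdegp : p.degree < ((Finset.univ : Finset (Fin (N+1))).card : ℕ) := by
    rw [hcard]
    refine lt_of_le_of_lt Polynomial.degree_le_natDegree ?_
    exact_mod_cast Nat.lt_succ_self N
  have hdegT : Tq.degree < ((Finset.univ : Finset (Fin (N+1))).card : ℕ) := by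
    rw [hcard]
    have hnd : Tq.natDegree ≤ N := by
      rw [hTq_def]
      refine le_trans (Polynomial.natDegree_comp_le) ?_
      have h1 := aux_natDegree_T_le N
      have h2 : (Polynomial.C ((1+a)/(1-a)) - Polynomial.C (2/(1-a)) * Polynomial.X
          : ℝ[X]).natDegree ≤ 1 := by
        refine le_trans (Polynomial.natDegree_sub_le _ _) ?_
        simp only [Polynomial.natDegree_C, max_le_iff]
        refine ⟨by omega, ?_⟩
        exact le_trans (Polynomial.natDegree_mul_le) (by simp)
      calc (Polynomial.Chebyshev.T ℝ (N:ℤ)).natDegree *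
            (Polynomial.C ((1+a)/(1-a)) - Polynomial.C (2/(1-a)) * Polynomial.X
              : ℝ[X]).natDegree
          ≤ N * 1 := Nat.mul_le_mul h1 h2
        _ = N := by ring
    refine lt_of_le_of_lt Polynomial.degree_le_natDegree ?_
    exact_mod_cast Nat.lt_succ_of_le hnd
  -- Lagrange interpolation
  have hp_sum : p.eval 0 = ∑ j : Fin (N+1),
      p.eval (v j) * (Lagrange.basis Finset.univ v j).eval 0 := by
    conv_lhs => rw [Lagrange.eq_interpolate hv_inj hdegp]
    rw [Lagrange.interpolate_apply, Polynomial.eval_finset_sum]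
    exact Finset.sum_congr rfl fun j _ => by rw [Polynomial.eval_mul, Polynomial.eval_C]
  have hT_sum : Tq.eval 0 = ∑ j : Fin (N+1),
      (-1)^(j:ℕ) * (Lagrange.basis Finset.univ v j).eval 0 := by
    conv_lhs => rw [Lagrange.eq_interpolate hv_inj hdegT]
    rw [Lagrange.interpolate_apply, Polynomial.eval_finset_sum]
    exact Finset.sum_congr rfl fun j _ => by
      rw [Polynomial.eval_mul, Polynomial.eval_C, hTnode j]
  have hbasis : ∀ j : Fin (N+1), (Lagrange.basis Finset.univ v j).eval 0
      = ∏ k ∈ Finset.univ.erase j, ((v j - v k)⁻¹ * (0 - v k)) := by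
    intro j
    simp [Lagrange.basis, Lagrange.basisDivisor, Polynomial.eval_prod]
  have habs : ∀ j : Fin (N+1), |(Lagrange.basis Finset.univ v j).eval 0|
      = (-1)^(j:ℕ) * (Lagrange.basis Finset.univ v j).eval 0 := by
    intro j
    rw [hbasis j, Finset.abs_prod, ← aux_sign v hmono hv_pos j]
  -- key inequality
  set y0 : ℝ := (1+a)/(1-a) with hy0_def
  have hy0 : 1 < y0 := by
    rw [hy0_def, lt_div_iff₀ h1a]; linarith
  have key : (3:ℝ) ≤ (Polynomial.Chebyshev.T ℝ (N:ℤ)).eval y0 := by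
    have hchain : (1:ℝ) ≤ (1/3) * ((Polynomial.Chebyshev.T ℝ (N:ℤ)).eval y0) := by
      calc (1:ℝ) = |p.eval 0| := by rw [hp0]; norm_num
        _ = |∑ j : Fin (N+1), p.eval (v j) * (Lagrange.basis Finset.univ v j).eval 0| := by
            rw [← hp_sum]
        _ ≤ ∑ j : Fin (N+1), |p.eval (v j) * (Lagrange.basis Finset.univ v j).eval 0| :=
            Finset.abs_sum_le_sum_abs _ _
        _ = ∑ j : Fin (N+1), |p.eval (v j)| * |(Lagrange.basis Finset.univ v j).eval 0| := by
            simp [abs_mul]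
        _ ≤ ∑ j : Fin (N+1), (1/3) * |(Lagrange.basis Finset.univ v j).eval 0| := by
            refine Finset.sum_le_sum fun j _ => ?_
            exact mul_le_mul_of_nonneg_right (hpb (v j) (hv_mem j)) (abs_nonneg _)
        _ = (1/3) * ∑ j : Fin (N+1), |(Lagrange.basis Finset.univ v j).eval 0| := by
            rw [Finset.mul_sum]
        _ = (1/3) * ∑ j : Fin (N+1),
              (-1)^(j:ℕ) * (Lagrange.basis Finset.univ v j).eval 0 := by
            rw [Finset.sum_congr rfl fun j _ => habs j]
        _ = (1/3) * Tq.eval 0 := by rw [← hT_sum]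
        _ = (1/3) * ((Polynomial.Chebyshev.T ℝ (N:ℤ)).eval y0) := by
            rw [hTeval 0]
            norm_num
            rfl
    linarith
  -- Chebyshev growth bound
  have hy2 : 0 ≤ y0^2 - 1 := by nlinarith
  set s : ℝ := Real.sqrt (y0^2 - 1) with hs_def
  have hs0 : 0 ≤ s := Real.sqrt_nonneg _
  have hs_sq : s^2 = y0^2 - 1 := Real.sq_sqrt hy2
  set u : ℝ := y0 + s with hu_def
  have hu1 : 1 < u := by rw [hu_def]; linarith
  have hu0 : 0 < u := by linarith
  set t : ℝ := Real.log u with ht_def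
  have ht0 : 0 ≤ t := Real.log_nonneg hu1.le
  have huinv : u⁻¹ = y0 - s := by
    have hmul : u * (y0 - s) = 1 := by rw [hu_def]; nlinarith
    field_simp at hmul ⊢
    linarith [hmul]
  have hcosh : Real.cosh t = y0 := by
    rw [ht_def, Real.cosh_eq, Real.exp_log hu0, Real.exp_neg, Real.exp_log hu0, huinv]
    rw [hu_def]; ring
  have hTch : (Polynomial.Chebyshev.T ℝ (N:ℤ)).eval y0 = Real.cosh ((N:ℝ) * t) := by
    rw [← hcosh, aux_T_cosh (N:ℤ) t]
    norm_num
  have hcosh_le : Real.cosh ((N:ℝ)*t) ≤ Real.exp ((N:ℝ)*t) := by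
    rw [Real.cosh_eq]
    have hnt : 0 ≤ (N:ℝ)*t := by positivity
    have := Real.exp_le_exp.mpr (by linarith : -((N:ℝ)*t) ≤ (N:ℝ)*t)
    linarith
  have hlog3le : Real.log 3 ≤ (N:ℝ) * t := by
    have h3 : (3:ℝ) ≤ Real.exp ((N:ℝ)*t) := by
      rw [← hTch] at hcosh_le
      linarith
    calc Real.log 3 ≤ Real.log (Real.exp ((N:ℝ)*t)) := Real.log_le_log (by norm_num) h3
      _ = (N:ℝ)*t := Real.log_exp _
  have ht_le : t ≤ 8 / Real.sqrt κ := by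
    have h1 : t ≤ u - 1 := by
      rw [ht_def]
      have := Real.add_one_le_exp (Real.log u)
      rw [Real.exp_log hu0] at this
      linarith
    have hy0m1 : y0 - 1 = 2*a/(1-a) := by
      rw [hy0_def]; field_simp; ring
    have h2 : y0 - 1 ≤ 4 * a := by
      rw [hy0m1, div_le_iff₀ h1a]; nlinarith
    have hy3 : y0 ≤ 3 := by
      rw [hy0_def, div_le_iff₀ h1a]; nlinarith
    have hb : y0^2 - 1 ≤ 16 * a := by nlinarith
    have h3 : s ≤ 4 * Real.sqrt a := by
      calc s ≤ Real.sqrt (16*a) := Real.sqrt_le_sqrt hb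
        _ = 4 * Real.sqrt a := by
            rw [show (16:ℝ)*a = (4:ℝ)^2 * a by ring, Real.sqrt_mul (by positivity) a,
              Real.sqrt_sq (by norm_num)]
    have hsa : Real.sqrt a = 1 / Real.sqrt κ := by
      rw [ha_def, one_div, one_div, Real.sqrt_inv]
    have hsl : Real.sqrt κ ≤ κ := by
      calc Real.sqrt κ ≤ Real.sqrt (κ^2) := Real.sqrt_le_sqrt (by nlinarith)
        _ = κ := Real.sqrt_sq hκ0.le
    have h4 : 4 * a ≤ 4 / Real.sqrt κ := by
      rw [ha_def, show (4:ℝ) * (1/κ) = 4/κ by ring, div_le_div_iff₀ hκ0 hsqpos]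
      nlinarith
    calc t ≤ u - 1 := h1
      _ = (y0 - 1) + s := by rw [hu_def]; ring
      _ ≤ 4*a + 4*Real.sqrt a := by linarith
      _ ≤ 4/Real.sqrt κ + 4*(1/Real.sqrt κ) := by rw [hsa]; linarith
      _ = 8 / Real.sqrt κ := by ring
  have hfin : Real.log 3 * Real.sqrt κ ≤ 8 * (N:ℝ) := by
    have h5 : (N:ℝ) * t ≤ (N:ℝ) * (8 / Real.sqrt κ) :=
      mul_le_mul_of_nonneg_left ht_le (by positivity)
    have h6 : Real.log 3 ≤ (N:ℝ) * (8/Real.sqrt κ) := le_trans hlog3le h5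
    have h7 := mul_le_mul_of_nonneg_right h6 hsqnn
    have h8 : (N:ℝ)*(8/Real.sqrt κ)*Real.sqrt κ = 8*(N:ℝ) := by
      field_simp
    linarith
  linarith
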